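/- Two-term discretization error bound for the approximate exposure: let a < b, let ℓ : [a,b] → ℝ² be continuous, s ∈ ℝ², ρ > 0, let u : [a,b] → ℝ be continuous, and let 𝒦 : [0,∞) → (0,1] be nonincreasing. For M ≥ 1 set h = (b−a)/M, C_m = [a+(m−1)h, a+mh] with midpoint c̄_m = a + (2m−1)h/2, and write d(c) = ‖ℓ(c) − s‖. Then | ∑_{m=1}^M 𝒦(d(c̄_m)/ρ) e^{u(c̄_m)} h − ∫_a^b 𝒦(d(c)/ρ) e^{u(c)} dc | ≤ ∑_{m=1}^M [ 𝒦(d(c̄_m)/ρ) ∫_{C_m} |e^{u(c)} − e^{u(c̄_m)}| dc + ( 𝒦((min_{x ∈ C_m} d(x))/ρ) − 𝒦((max_{x ∈ C_m} d(x))/ρ) ) ∫_{C_m} e^{u(c)} dc ]. -/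

import Mathlib

open MeasureTheory Set


lemma kmax_meas (K : ℝ → ℝ) (hKmono : AntitoneOn K (Set.Ici 0)) :
    Measurable (fun x => K (max x 0)) := by
  have h : Antitone (fun x => K (max x 0)) := fun x y hxy =>
    hKmono (le_max_right x 0) (le_max_right y 0) (max_le_max hxy le_rfl)
  exact h.measurable

lemma aux_integrable (p q : ℝ) (hpq : p ≤ q) (d u : ℝ → ℝ)
    (hd : ContinuousOn d (Set.Icc p q)) (hd0 : ∀ c, 0 ≤ d c)
    (hu : ContinuousOn u (Set.Icc p q))
    (K : ℝ → ℝ) (hKmono : AntitoneOn K (Set.Ici 0))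
    (hKrange : ∀ x : ℝ, 0 ≤ x → K x ∈ Set.Ioc (0 : ℝ) 1)
    (ρ : ℝ) (hρ : 0 < ρ) :
    IntervalIntegrable (fun c => K (d c / ρ) * Real.exp (u c)) volume p q := by
  rw [intervalIntegrable_iff_integrableOn_Icc_of_le hpq]
  have hfe : (fun c => K (d c / ρ) * Real.exp (u c))
      = fun c => (fun x => K (max x 0)) (d c / ρ) * Real.exp (u c) := by
    funext c
    have : max (d c / ρ) 0 = d c / ρ := max_eq_left (div_nonneg (hd0 c) hρ.le)
    show _ = K (max (d c / ρ) 0) * Real.exp (u c)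
    rw [this]
  have hg : IntegrableOn (fun c => Real.exp (u c)) (Set.Icc p q) :=
    (Real.continuous_exp.comp_continuousOn hu).integrableOn_Icc
  apply hg.mono'
  · rw [hfe]
    have h1 : AEMeasurable (fun c => d c / ρ) (volume.restrict (Set.Icc p q)) :=
      (hd.aemeasurable measurableSet_Icc).div_const ρ
    have h2 : AEMeasurable (fun c => Real.exp (u c)) (volume.restrict (Set.Icc p q)) :=
      (Real.continuous_exp.comp_continuousOn hu).aemeasurable measurableSet_Icc
    exact (((kmax_meas K hKmono).comp_aemeasurable h1).mul h2).aestronglyMeasurable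
  · filter_upwards with c
    have hK := hKrange (d c / ρ) (div_nonneg (hd0 c) hρ.le)
    rw [Real.norm_eq_abs, abs_mul, abs_of_pos hK.1, abs_of_pos (Real.exp_pos _)]
    calc K (d c / ρ) * Real.exp (u c) ≤ 1 * Real.exp (u c) := by
          exact mul_le_mul_of_nonneg_right hK.2 (Real.exp_pos _).le
      _ = Real.exp (u c) := one_mul _

lemma key_bound (p q cm ρ : ℝ) (hρ : 0 < ρ) (hpq : p ≤ q) (hcm : cm ∈ Set.Icc p q)
    (d u : ℝ → ℝ) (hd : ContinuousOn d (Set.Icc p q)) (hd0 : ∀ c, 0 ≤ d c)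
    (hu : ContinuousOn u (Set.Icc p q))
    (K : ℝ → ℝ) (hKmono : AntitoneOn K (Set.Ici 0))
    (hKrange : ∀ x : ℝ, 0 ≤ x → K x ∈ Set.Ioc (0 : ℝ) 1) :
    |K (d cm / ρ) * Real.exp (u cm) * (q - p) -
        ∫ c in p..q, K (d c / ρ) * Real.exp (u c)| ≤
      K (d cm / ρ) * (∫ c in p..q, |Real.exp (u c) - Real.exp (u cm)|) +
        (K (sInf (d '' Set.Icc p q) / ρ) - K (sSup (d '' Set.Icc p q) / ρ)) *
          ∫ c in p..q, Real.exp (u c) := by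
  set S := d '' Set.Icc p q with hS
  have hSne : S.Nonempty := (Set.nonempty_Icc.2 hpq).image d
  have hScpt : IsCompact S := isCompact_Icc.image_of_continuousOn hd
  have hbdda : BddAbove S := hScpt.bddAbove
  have hbddb : BddBelow S := hScpt.bddBelow
  have hInf0 : 0 ≤ sInf S := le_csInf hSne (by rintro x ⟨c, _, rfl⟩; exact hd0 c)
  have hSup0 : 0 ≤ sSup S := hInf0.trans ((csInf_le hbddb hSne.some_mem).trans (le_csSup hbdda hSne.some_mem))
  -- bounds on K values on the interval
  have hKbnd : ∀ c ∈ Set.Icc p q,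
      K (sSup S / ρ) ≤ K (d c / ρ) ∧ K (d c / ρ) ≤ K (sInf S / ρ) := by
    intro c hc
    have h1 : sInf S ≤ d c := csInf_le hbddb ⟨c, hc, rfl⟩
    have h2 : d c ≤ sSup S := le_csSup hbdda ⟨c, hc, rfl⟩
    constructor
    · exact hKmono (Set.mem_Ici.2 (div_nonneg (hd0 c) hρ.le))
        (Set.mem_Ici.2 (div_nonneg hSup0 hρ.le))
        (by gcongr)
    · exact hKmono (Set.mem_Ici.2 (div_nonneg hInf0 hρ.le))
        (Set.mem_Ici.2 (div_nonneg (hd0 c) hρ.le))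
        (by gcongr)
  have hfint : IntervalIntegrable (fun c => K (d c / ρ) * Real.exp (u c)) volume p q :=
    aux_integrable p q hpq d u hd hd0 hu K hKmono hKrange ρ hρ
  have hC : K (d cm / ρ) * Real.exp (u cm) * (q - p)
      = ∫ _ in p..q, K (d cm / ρ) * Real.exp (u cm) := by
    rw [intervalIntegral.integral_const, smul_eq_mul]; ring
  rw [hC, ← intervalIntegral.integral_sub intervalIntegrable_const hfint]
  have habs : |∫ c in p..q,
      (K (d cm / ρ) * Real.exp (u cm) - K (d c / ρ) * Real.exp (u c))| ≤
      ∫ c in p..q,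
        |K (d cm / ρ) * Real.exp (u cm) - K (d c / ρ) * Real.exp (u c)| :=
    intervalIntegral.abs_integral_le_integral_abs hpq
  refine habs.trans ?_
  have huexp : ContinuousOn (fun c => Real.exp (u c)) (Set.Icc p q) :=
    Real.continuous_exp.comp_continuousOn hu
  have hint1 : IntervalIntegrable
      (fun c => |K (d cm / ρ) * Real.exp (u cm) - K (d c / ρ) * Real.exp (u c)|)
      volume p q := (intervalIntegrable_const.sub hfint).abs
  have hint2 : IntervalIntegrable
      (fun c => K (d cm / ρ) * |Real.exp (u c) - Real.exp (u cm)| +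
        (K (sInf S / ρ) - K (sSup S / ρ)) * Real.exp (u c)) volume p q := by
    apply IntervalIntegrable.add
    · apply ContinuousOn.intervalIntegrable
      rw [Set.uIcc_of_le hpq]
      exact continuousOn_const.mul ((huexp.sub continuousOn_const).abs)
    · apply ContinuousOn.intervalIntegrable
      rw [Set.uIcc_of_le hpq]
      exact continuousOn_const.mul huexp
  have hmono := intervalIntegral.integral_mono_on hpq hint1 hint2 (by
    intro c hc
    have hKm := hKbnd cm hcm
    have hKc := hKbnd c hc
    have hKpos := hKrange (d cm / ρ) (div_nonneg (hd0 cm) hρ.le)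
    have key : K (d cm / ρ) * Real.exp (u cm) - K (d c / ρ) * Real.exp (u c)
        = K (d cm / ρ) * (Real.exp (u cm) - Real.exp (u c)) +
          (K (d cm / ρ) - K (d c / ρ)) * Real.exp (u c) := by ring
    rw [key]
    calc |K (d cm / ρ) * (Real.exp (u cm) - Real.exp (u c)) +
          (K (d cm / ρ) - K (d c / ρ)) * Real.exp (u c)|
        ≤ |K (d cm / ρ) * (Real.exp (u cm) - Real.exp (u c))| +
          |(K (d cm / ρ) - K (d c / ρ)) * Real.exp (u c)| := abs_add_le _ _
      _ = K (d cm / ρ) * |Real.exp (u c) - Real.exp (u cm)| +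
          |K (d cm / ρ) - K (d c / ρ)| * Real.exp (u c) := by
          rw [abs_mul, abs_mul, abs_of_pos hKpos.1, abs_sub_comm,
            abs_of_pos (Real.exp_pos _)]
      _ ≤ K (d cm / ρ) * |Real.exp (u c) - Real.exp (u cm)| +
          (K (sInf S / ρ) - K (sSup S / ρ)) * Real.exp (u c) := by
          apply add_le_add le_rfl
          apply mul_le_mul_of_nonneg_right _ (Real.exp_pos _).le
          rw [abs_sub_le_iff]
          constructor
          · linarith [hKm.2, hKc.1]
          · linarith [hKc.2, hKm.1]
      )
  refine hmono.trans ?_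
  rw [intervalIntegral.integral_add]
  · rw [intervalIntegral.integral_const_mul, intervalIntegral.integral_const_mul]
  · apply ContinuousOn.intervalIntegrable
    rw [Set.uIcc_of_le hpq]
    exact continuousOn_const.mul ((huexp.sub continuousOn_const).abs)
  · apply ContinuousOn.intervalIntegrable
    rw [Set.uIcc_of_le hpq]
    exact continuousOn_const.mul huexp

/-- Two-term discretization error bound for the approximate exposure: for a nonincreasing
kernel `𝒦 : [0,∞) → (0,1]`, a continuous curve `ℓ`, a continuous `u`, and the uniform
partition of `[a,b]` into `M` intervals `C_m` with midpoints `c̄_m` and width `h = (b−a)/M`,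
`|∑_m 𝒦(d(c̄_m)/ρ) e^{u(c̄_m)} h − ∫_a^b 𝒦(d(c)/ρ) e^{u(c)} dc|`
is at most
`∑_m [𝒦(d(c̄_m)/ρ) ∫_{C_m} |e^{u(c)} − e^{u(c̄_m)}| dc
  + (𝒦(min_{C_m} d / ρ) − 𝒦(max_{C_m} d / ρ)) ∫_{C_m} e^{u(c)} dc]`,
where `d(c) = ‖ℓ(c) − s‖`. -/
theorem exposure_discretization_two_term_bound (a b : ℝ) (hab : a < b)
    (ℓ : ℝ → EuclideanSpace ℝ (Fin 2)) (hℓ : ContinuousOn ℓ (Set.Icc a b))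
    (s : EuclideanSpace ℝ (Fin 2)) (ρ : ℝ) (hρ : 0 < ρ)
    (u : ℝ → ℝ) (hu : ContinuousOn u (Set.Icc a b))
    (K : ℝ → ℝ) (hKmono : AntitoneOn K (Set.Ici 0))
    (hKrange : ∀ x : ℝ, 0 ≤ x → K x ∈ Set.Ioc (0 : ℝ) 1)
    (M : ℕ) (hM : 1 ≤ M) :
    |(∑ m ∈ Finset.Icc 1 M,
        K (‖ℓ (a + (2 * (m : ℝ) - 1) * ((b - a) / M) / 2) - s‖ / ρ) *
          Real.exp (u (a + (2 * (m : ℝ) - 1) * ((b - a) / M) / 2)) * ((b - a) / M)) -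
      ∫ c in a..b, K (‖ℓ c - s‖ / ρ) * Real.exp (u c)| ≤
    ∑ m ∈ Finset.Icc 1 M,
      (K (‖ℓ (a + (2 * (m : ℝ) - 1) * ((b - a) / M) / 2) - s‖ / ρ) *
          (∫ c in (a + ((m : ℝ) - 1) * ((b - a) / M))..(a + (m : ℝ) * ((b - a) / M)),
            |Real.exp (u c) -
              Real.exp (u (a + (2 * (m : ℝ) - 1) * ((b - a) / M) / 2))|) +
        (K (sInf ((fun c => ‖ℓ c - s‖) ''
              Set.Icc (a + ((m : ℝ) - 1) * ((b - a) / M))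
                (a + (m : ℝ) * ((b - a) / M))) / ρ) -
          K (sSup ((fun c => ‖ℓ c - s‖) ''
              Set.Icc (a + ((m : ℝ) - 1) * ((b - a) / M))
                (a + (m : ℝ) * ((b - a) / M))) / ρ)) *
          ∫ c in (a + ((m : ℝ) - 1) * ((b - a) / M))..(a + (m : ℝ) * ((b - a) / M)),
            Real.exp (u c)) := by
  set h : ℝ := (b - a) / M with hh_def
  have hM0 : (0:ℝ) < M := by exact_mod_cast hM
  have hh : 0 < h := div_pos (sub_pos.2 hab) hM0
  set d : ℝ → ℝ := fun c => ‖ℓ c - s‖ with hd_def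
  set f : ℝ → ℝ := fun c => K (d c / ρ) * Real.exp (u c) with hf_def
  have hd0 : ∀ c, 0 ≤ d c := fun c => norm_nonneg _
  have hdcont : ContinuousOn d (Set.Icc a b) :=
    ((hℓ.sub continuousOn_const).norm)
  -- the subintervals sit inside [a,b]
  have hsub : ∀ m : ℕ, m ∈ Finset.Icc 1 M →
      Set.Icc (a + ((m : ℝ) - 1) * h) (a + (m : ℝ) * h) ⊆ Set.Icc a b := by
    intro m hm
    rw [Finset.mem_Icc] at hm
    have h1 : (1:ℝ) ≤ (m:ℝ) := by exact_mod_cast hm.1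
    have h2 : (m:ℝ) ≤ (M:ℝ) := by exact_mod_cast hm.2
    apply Set.Icc_subset_Icc
    · nlinarith
    · have : (m:ℝ) * h ≤ (M:ℝ) * h := by nlinarith
      have hMh : (M:ℝ) * h = b - a := by
        rw [hh_def]; field_simp
      linarith
  -- integrability on each subinterval
  have hfint : ∀ m : ℕ, m ∈ Finset.Icc 1 M →
      IntervalIntegrable f volume (a + ((m : ℝ) - 1) * h) (a + (m : ℝ) * h) := by
    intro m hm
    have hpq : a + ((m : ℝ) - 1) * h ≤ a + (m : ℝ) * h := by nlinarith
    exact aux_integrable _ _ hpq d u (hdcont.mono (hsub m hm)) hd0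
      (hu.mono (hsub m hm)) K hKmono hKrange ρ hρ
  -- split the integral
  have hsplit : ∫ c in a..b, f c
      = ∑ m ∈ Finset.Icc 1 M, ∫ c in (a + ((m : ℝ) - 1) * h)..(a + (m : ℝ) * h), f c := by
    have hadj : ∀ k < M, IntervalIntegrable f volume
        (a + (k : ℝ) * h) (a + ((k : ℝ) + 1) * h) := by
      intro k hk
      have hmem : k + 1 ∈ Finset.Icc 1 M := Finset.mem_Icc.2 ⟨Nat.le_add_left 1 k, hk⟩
      have := hfint (k + 1) hmem
      push_cast at this
      convert this using 2 <;> ring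
    have hsum := intervalIntegral.sum_integral_adjacent_intervals
      (a := fun k => a + (k : ℝ) * h) (μ := volume) (f := f) (n := M) (by
        intro k hk
        have := hadj k hk
        push_cast
        convert this using 2 <;> ring)
    have h0 : a + ((0:ℕ) : ℝ) * h = a := by push_cast; ring
    have hMb : a + ((M:ℕ) : ℝ) * h = b := by
      rw [hh_def]; field_simp; ring
    rw [h0, hMb] at hsum
    rw [← hsum]
    rw [← Finset.Ico_add_one_right_eq_Icc, Finset.sum_Ico_eq_sum_range]
    apply Finset.sum_congr (by norm_num)
    intro i _
    congr 1 <;> push_cast <;> ring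
  calc |(∑ m ∈ Finset.Icc 1 M,
        K (d (a + (2 * (m : ℝ) - 1) * h / 2) / ρ) *
          Real.exp (u (a + (2 * (m : ℝ) - 1) * h / 2)) * h) - ∫ c in a..b, f c|
      = |∑ m ∈ Finset.Icc 1 M,
          (K (d (a + (2 * (m : ℝ) - 1) * h / 2) / ρ) *
            Real.exp (u (a + (2 * (m : ℝ) - 1) * h / 2)) * h -
          ∫ c in (a + ((m : ℝ) - 1) * h)..(a + (m : ℝ) * h), f c)| := by
        rw [hsplit, ← Finset.sum_sub_distrib]
    _ ≤ ∑ m ∈ Finset.Icc 1 M,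
          |K (d (a + (2 * (m : ℝ) - 1) * h / 2) / ρ) *
            Real.exp (u (a + (2 * (m : ℝ) - 1) * h / 2)) * h -
          ∫ c in (a + ((m : ℝ) - 1) * h)..(a + (m : ℝ) * h), f c| :=
        Finset.abs_sum_le_sum_abs _ _
    _ ≤ _ := by
        apply Finset.sum_le_sum
        intro m hm
        rw [Finset.mem_Icc] at hm
        have h1 : (1:ℝ) ≤ (m:ℝ) := by exact_mod_cast hm.1
        have hpq : a + ((m : ℝ) - 1) * h ≤ a + (m : ℝ) * h := by nlinarith
        have hcm : a + (2 * (m : ℝ) - 1) * h / 2 ∈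
            Set.Icc (a + ((m : ℝ) - 1) * h) (a + (m : ℝ) * h) := by
          constructor <;> [nlinarith; nlinarith]
        have hmem : m ∈ Finset.Icc 1 M := Finset.mem_Icc.2 hm
        have hq : h = (a + (m : ℝ) * h) - (a + ((m : ℝ) - 1) * h) := by ring
        have := key_bound (a + ((m : ℝ) - 1) * h) (a + (m : ℝ) * h)
          (a + (2 * (m : ℝ) - 1) * h / 2) ρ hρ hpq hcm d u
          (hdcont.mono (hsub m hmem)) hd0 (hu.mono (hsub m hmem)) K hKmono hKrange
        rw [show (a + (m:ℝ) * h) - (a + ((m:ℝ) - 1) * h) = h by ring] at this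
        exact this
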